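/- For every ε > 0 there exist finitely many dilation factors t₁,...,t_n > 0 such that for every x ∈ ℝ there is some j with dist(x/t_j, ℤ) < ε. Equivalently, the real line is covered by finitely many dilates t_j · (ℤ + (-ε,ε)) of the ε-neighborhood of the integers. -/
import Mathlib


open Set

/-- For every `ε > 0` finitely many dilates of the `ε`-neighborhood of the integers cover
the real line: there are `t₁, …, t_n > 0` such that every `x ∈ ℝ` satisfies
`dist (x / t_j, ℤ) < ε` for some `j`. -/
theorem finitely_many_dilates_cover_line (ε : ℝ) (hε : 0 < ε) :
    ∃ (n : ℕ) (t : Fin n → ℝ), (∀ j, 0 < t j) ∧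
      ∀ x : ℝ, ∃ j : Fin n, ∃ m : ℤ, |x / t j - (m : ℝ)| < ε := by
  -- Choose `n` so that `1/(n+1) < ε`, and use the dilation factors `1/(j+1)`.
  obtain ⟨n, hn⟩ := exists_nat_gt (1 / ε)
  have n_pos : 0 < n + 1 := Nat.succ_pos n
  refine ⟨n + 1, fun j => 1 / ((j : ℝ) + 1), fun j => by positivity, fun x => ?_⟩
  obtain ⟨m, k, hk0, hkn, h⟩ := Real.exists_int_int_abs_mul_sub_le x n_pos
  -- index `j` corresponds to `k`
  have hk1 : 1 ≤ k.toNat := by omega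
  have hklt : k.toNat - 1 < n + 1 := by omega
  refine ⟨⟨k.toNat - 1, hklt⟩, m, ?_⟩
  have hkk : ((⟨k.toNat - 1, hklt⟩ : Fin (n + 1)) : ℝ) + 1 = (k : ℝ) := by
    push_cast
    have : (k.toNat : ℝ) = (k : ℝ) := by exact_mod_cast Int.toNat_of_nonneg hk0.le
    rw [Nat.cast_sub hk1]
    push_cast [this]
    ring
  have hkpos : (0 : ℝ) < (k : ℝ) := by exact_mod_cast hk0
  have hdiv : x / (1 / (((⟨k.toNat - 1, hklt⟩ : Fin (n + 1)) : ℝ) + 1)) = (k : ℝ) * x := by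
    rw [hkk, div_div_eq_mul_div, div_one, mul_comm]
  rw [hdiv]
  calc |(k : ℝ) * x - m| ≤ 1 / ((n : ℝ) + 1 + 1) := by exact_mod_cast h
    _ < ε := by
        rw [div_lt_iff₀ (by positivity)]
        rw [div_lt_iff₀ hε] at hn
        nlinarith
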